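/- Subgradient certificate for prox-gradient on regularized least squares: if z⁺ = prox_{αΦ}(z − α Aᵀ(Az − a)) with α = 1/‖A‖₂², then the vector v = (‖A‖₂² I − AᵀA)(z − z⁺) satisfies v ∈ ∂̂p(z⁺) where p(z) = (1/2)‖Az − a‖² + Φ(z) and ∂̂ denotes the Fréchet (regular) subdifferential. -/

import Mathlib

/-- Fréchet (regular) subdifferential of an extended-real-valued function. -/
def frechetSubdiff {n : ℕ} (p : EuclideanSpace ℝ (Fin n) → EReal)
    (x : EuclideanSpace ℝ (Fin n)) : Set (EuclideanSpace ℝ (Fin n)) :=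
  {v | ∀ ε : ℝ, 0 < ε → ∀ᶠ u in nhds x,
    p x + (((inner ℝ v (u - x) : ℝ) - ε * ‖u - x‖ : ℝ) : EReal) ≤ p u}

set_option maxHeartbeats 1000000 in
/-- Subgradient certificate for prox-gradient on regularized least squares:
v = (‖A‖² I − AᵀA)(z − z⁺) is a Fréchet subgradient of p at z⁺. -/
theorem prox_gradient_subgradient (n m : ℕ)
    (A : EuclideanSpace ℝ (Fin n) →L[ℝ] EuclideanSpace ℝ (Fin m))
    (a : EuclideanSpace ℝ (Fin m)) (hA : A ≠ 0)
    (Φ : EuclideanSpace ℝ (Fin n) → EReal)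
    (hbot : ∀ z, Φ z ≠ ⊥) (hproper : ∃ z, Φ z ≠ ⊤)
    (hlsc : LowerSemicontinuous Φ)
    (hbdd : ∃ mlb : ℝ, ∀ z, (mlb : EReal) ≤ Φ z)
    (α : ℝ) (hα : α = 1 / ‖A‖ ^ 2)
    (p : EuclideanSpace ℝ (Fin n) → EReal)
    (hp : p = fun z => (((1 / 2) * ‖A z - a‖ ^ 2 : ℝ) : EReal) + Φ z)
    (z zp : EuclideanSpace ℝ (Fin n))
    (hprox : ∀ u,
      (((1 / (2 * α)) * ‖zp - (z - α • (ContinuousLinearMap.adjoint A) (A z - a))‖ ^ 2 : ℝ) : EReal)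
          + Φ zp ≤
      (((1 / (2 * α)) * ‖u - (z - α • (ContinuousLinearMap.adjoint A) (A z - a))‖ ^ 2 : ℝ) : EReal)
          + Φ u) :
    ‖A‖ ^ 2 • (z - zp) - (ContinuousLinearMap.adjoint A) (A (z - zp)) ∈
      frechetSubdiff p zp := by
  classical
  have hApos : (0:ℝ) < ‖A‖ := norm_pos_iff.mpr hA
  set L : ℝ := ‖A‖ ^ 2 with hLdef
  have hLpos : 0 < L := by positivity
  have hαL : L * α = 1 := by rw [hα]; field_simp
  have hcoef : 1 / (2 * α) = L / 2 := by
    rw [hα]; field_simp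
  set w : EuclideanSpace ℝ (Fin n) :=
    z - α • (ContinuousLinearMap.adjoint A) (A z - a) with hw
  -- Φ zp is real
  obtain ⟨z0, hz0⟩ := hproper
  have hz0r : Φ z0 = ((Φ z0).toReal : EReal) := (EReal.coe_toReal hz0 (hbot z0)).symm
  have hzp_ne_top : Φ zp ≠ ⊤ := by
    intro htop
    have H := hprox z0
    rw [htop, hz0r, EReal.coe_add_top, ← EReal.coe_add] at H
    exact EReal.coe_ne_top _ (top_le_iff.mp H)
  set φp : ℝ := (Φ zp).toReal with hφpdef
  have hφp : Φ zp = (φp : EReal) := (EReal.coe_toReal hzp_ne_top (hbot zp)).symm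
  simp only [frechetSubdiff, Set.mem_setOf_eq]
  intro ε hε
  have hball : Metric.ball zp (2 * ε / L) ∈ nhds zp :=
    Metric.ball_mem_nhds zp (by positivity)
  filter_upwards [hball] with u hu
  by_cases htop : Φ u = ⊤
  · rw [hp]
    simp only
    rw [htop, EReal.coe_add_top]
    exact le_top
  · set φu : ℝ := (Φ u).toReal with hφudef
    have hφu : Φ u = (φu : EReal) := (EReal.coe_toReal htop (hbot u)).symm
    set δ : EuclideanSpace ℝ (Fin n) := u - zp with hδ
    have hδnorm : ‖δ‖ < 2 * ε / L := by
      rw [hδ, ← dist_eq_norm]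
      exact hu
    -- real prox inequality
    have Hr : (L / 2) * ‖zp - w‖ ^ 2 + φp ≤ (L / 2) * ‖u - w‖ ^ 2 + φu := by
      have H := hprox u
      rw [hφp, hφu, hcoef, ← EReal.coe_add, ← EReal.coe_add] at H
      exact_mod_cast H
    -- expansions
    set t1 : ℝ := inner ℝ (A zp - a) (A δ) with ht1
    set t2 : ℝ := inner ℝ (A z - a) (A δ) with ht2
    set t4 : ℝ := inner ℝ (z - zp) δ with ht4
    have e1 : ‖A u - a‖ ^ 2 = ‖A zp - a‖ ^ 2 + 2 * t1 + ‖A δ‖ ^ 2 := by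
      have : A u - a = (A zp - a) + A δ := by rw [hδ, map_sub]; abel
      rw [this, ht1]
      rw [norm_add_sq_real]
    have e2 : ‖u - w‖ ^ 2 = ‖zp - w‖ ^ 2 + 2 * inner ℝ (zp - w) δ + ‖δ‖ ^ 2 := by
      have : u - w = (zp - w) + δ := by rw [hδ]; abel
      rw [this, norm_add_sq_real]
    have e4 : inner ℝ (zp - w) δ = -t4 + α * t2 := by
      have hzw : zp - w = (zp - z) + α • (ContinuousLinearMap.adjoint A) (A z - a) := by
        rw [hw]; abel
      rw [hzw, inner_add_left, real_inner_smul_left,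
        ContinuousLinearMap.adjoint_inner_left, ht2, ht4]
      have : (inner ℝ (zp - z) δ : ℝ) = - inner ℝ (z - zp) δ := by
        rw [show zp - z = -(z - zp) by abel, inner_neg_left]
      rw [this]
    have e3 : (inner ℝ (L • (z - zp) - (ContinuousLinearMap.adjoint A) (A (z - zp))) δ : ℝ)
        = L * t4 - (t2 - t1) := by
      rw [ht1, ht2, ht4]
      simp only [inner_sub_left, real_inner_smul_left,
        ContinuousLinearMap.adjoint_inner_left, map_sub]
      ring
    -- key real inequality
    have e2' : (L/2) * ‖u - w‖ ^ 2
        = (L/2) * ‖zp - w‖ ^ 2 + L * inner ℝ (zp - w) δ + (L/2) * ‖δ‖ ^ 2 := by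
      rw [e2]; ring
    have e4' : L * (inner ℝ (zp - w) δ : ℝ) = -(L * t4) + t2 := by
      rw [e4]
      have : L * (-t4 + α * t2) = -(L * t4) + (L * α) * t2 := by ring
      rw [this, hαL, one_mul]
    have H' : φp ≤ -(L * t4) + t2 + (L/2) * ‖δ‖ ^ 2 + φu := by
      rw [e2', e4'] at Hr; linarith
    have e6 : (L/2) * ‖δ‖ ^ 2 ≤ ε * ‖δ‖ := by
      have hd : ‖δ‖ * L < 2 * ε := (lt_div_iff₀ hLpos).mp hδnorm
      have h3 : (‖δ‖ * L) * ‖δ‖ ≤ (2 * ε) * ‖δ‖ :=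
        mul_le_mul_of_nonneg_right hd.le (norm_nonneg δ)
      nlinarith [h3]
    have key : (1/2) * ‖A zp - a‖ ^ 2 + φp + ((L * t4 - (t2 - t1)) - ε * ‖δ‖)
        ≤ (1/2) * ‖A u - a‖ ^ 2 + φu := by
      rw [e1]
      have h4 : (0:ℝ) ≤ ‖A δ‖ ^ 2 := sq_nonneg _
      linarith [H', e6, h4]
    rw [hp]
    simp only
    rw [hφp, hφu, e3]
    exact_mod_cast key
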